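/- For any compact Hausdorff space K, if the Alexandroff duplicate AD(K) is semi-Eberlein, then K is Corson compact. -/

import Mathlib

open Topology Set

universe u v

/-- A space is *M-scattered* if every nonempty subspace contains a nonempty
relatively open second-countable subset. -/
def MScattered (X : Type*) [TopologicalSpace X] : Prop :=
  ∀ A : Set X, A.Nonempty → ∃ U : Set X, IsOpen U ∧ (A ∩ U).Nonempty ∧
    SecondCountableTopology ↥(A ∩ U)

/-- Corson compact: embeds into the Σ-product of copies of `[0,1]`. -/
def CorsonCompact (K : Type u) [TopologicalSpace K] : Prop :=
  ∃ (Γ : Type u) (f : K → Γ → unitInterval),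
    Topology.IsEmbedding f ∧ ∀ k, {γ | f k γ ≠ 0}.Countable

/-- Eberlein compact: embeds into `c₀(Γ)`. -/
def EberleinCompact (K : Type u) [TopologicalSpace K] : Prop :=
  ∃ (Γ : Type u) (f : K → Γ → unitInterval),
    Topology.IsEmbedding f ∧ ∀ k, ∀ ε : ℝ, 0 < ε → {γ | ε < (f k γ : ℝ)}.Finite

/-- NY compact: embeds into a σ-product of compact metrizable spaces. -/
def NYCompact (K : Type u) [TopologicalSpace K] : Prop :=
  ∃ (Γ : Type u) (X : Γ → Type u) (t : ∀ γ, TopologicalSpace (X γ)),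
    (∀ γ, @CompactSpace (X γ) (t γ)) ∧
    (∀ γ, @TopologicalSpace.MetrizableSpace (X γ) (t γ)) ∧
    ∃ (a : ∀ γ, X γ) (f : K → ∀ γ, X γ),
      @Topology.IsEmbedding K (∀ γ, X γ) _ (@Pi.topologicalSpace Γ X t) f ∧
      ∀ k, {γ | f k γ ≠ a γ}.Finite

/-- ω-Corson compact: embeds into the σ-product of copies of `[0,1]`. -/
def OmegaCorson (K : Type u) [TopologicalSpace K] : Prop :=
  ∃ (Γ : Type u) (f : K → Γ → unitInterval),
    Topology.IsEmbedding f ∧ ∀ k, {γ | f k γ ≠ 0}.Finite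

/-- Semi-Eberlein: embeds into `[0,1]^Γ` with `h(K) ∩ c₀(Γ)` dense in `h(K)`. -/
def SemiEberlein (K : Type u) [TopologicalSpace K] : Prop :=
  ∃ (Γ : Type u) (h : K → Γ → unitInterval), Topology.IsEmbedding h ∧
    Set.range h ⊆
      closure (Set.range h ∩ {x | ∀ ε : ℝ, 0 < ε → {γ | ε < (x γ : ℝ)}.Finite})

/-- ω-Valdivia: embeds into `[0,1]^Γ` with `h(K) ∩ σ([0,1]^Γ)` dense in `h(K)`. -/
def OmegaValdivia (K : Type u) [TopologicalSpace K] : Prop :=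
  ∃ (Γ : Type u) (h : K → Γ → unitInterval), Topology.IsEmbedding h ∧
    Set.range h ⊆ closure (Set.range h ∩ {x | {γ | x γ ≠ 0}.Finite})

/-- NY-Valdivia: embeds into a product of Hilbert cubes with the σ-product trace dense. -/
def NYValdivia (K : Type u) [TopologicalSpace K] : Prop :=
  ∃ (Γ : Type u) (h : K → Γ → ℕ → unitInterval), Topology.IsEmbedding h ∧
    Set.range h ⊆ closure (Set.range h ∩ {x | {γ | x γ ≠ 0}.Finite})

/-- The topology of the Alexandroff duplicate on `X × Bool`: points `(x, true)` are
isolated, and basic neighborhoods of `(x, false)` are `(U × Bool) \ {(x, true)}`. -/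
def adTopology (X : Type*) [TopologicalSpace X] : TopologicalSpace (X × Bool) where
  IsOpen V := ∀ x : X, (x, false) ∈ V →
    ∃ U : Set X, IsOpen U ∧ x ∈ U ∧ {p : X × Bool | p.1 ∈ U ∧ p ≠ (x, true)} ⊆ V
  isOpen_univ := fun x _ => ⟨Set.univ, isOpen_univ, trivial, fun _ _ => trivial⟩
  isOpen_inter := by
    intro V W hV hW x hx
    obtain ⟨U1, hU1, hx1, hs1⟩ := hV x hx.1
    obtain ⟨U2, hU2, hx2, hs2⟩ := hW x hx.2
    exact ⟨U1 ∩ U2, hU1.inter hU2, ⟨hx1, hx2⟩,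
      fun p hp => ⟨hs1 ⟨hp.1.1, hp.2⟩, hs2 ⟨hp.1.2, hp.2⟩⟩⟩
  isOpen_sUnion := by
    intro S hS x hx
    obtain ⟨V, hVS, hxV⟩ := hx
    obtain ⟨U, hU, hxU, hsub⟩ := hS V hVS x hxV
    exact ⟨U, hU, hxU, fun p hp => ⟨V, hVS, hsub hp⟩⟩

/-- A space is metalindelöf if every open cover has a point-countable open refinement. -/
def Metalindelof (X : Type*) [TopologicalSpace X] : Prop :=
  ∀ 𝒰 : Set (Set X), (∀ U ∈ 𝒰, IsOpen U) → ⋃₀ 𝒰 = Set.univ →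
    ∃ 𝒱 : Set (Set X), (∀ V ∈ 𝒱, IsOpen V) ∧ ⋃₀ 𝒱 = Set.univ ∧
      (∀ V ∈ 𝒱, ∃ U ∈ 𝒰, V ⊆ U) ∧ ∀ x : X, {V ∈ 𝒱 | x ∈ V}.Countable

/-- Hereditarily metalindelöf: every subspace is metalindelöf. -/
def HereditarilyMetalindelof (X : Type*) [TopologicalSpace X] : Prop :=
  ∀ A : Set X, Metalindelof ↥A


/-- Type synonym for the Alexandroff duplicate, carrying `adTopology` as instance. -/
def ADSpace (X : Type v) : Type v := X × Bool

instance ADSpace.topologicalSpace (X : Type v) [TopologicalSpace X] :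
    TopologicalSpace (ADSpace X) := adTopology X

section ADAux

variable {X : Type v} [TopologicalSpace X]

lemma ad_isOpen_iff {V : Set (X × Bool)} :
    @IsOpen (ADSpace X) _ V ↔ ∀ x : X, (x, false) ∈ V →
      ∃ U : Set X, IsOpen U ∧ x ∈ U ∧ {p : X × Bool | p.1 ∈ U ∧ p ≠ (x, true)} ⊆ V :=
  Iff.rfl

lemma ad_singleton_true (y : X) : @IsOpen (ADSpace X) _ {((y, true) : X × Bool)} := by
  refine ad_isOpen_iff.mpr ?_
  intro x hx
  replace hx : ((x, false) : X × Bool) = (y, true) := hx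
  exact absurd (congrArg Prod.snd hx) (by simp)

lemma ad_singleton_false {x : X} (hx : IsOpen ({x} : Set X)) :
    @IsOpen (ADSpace X) _ {((x, false) : X × Bool)} := by
  refine ad_isOpen_iff.mpr ?_
  intro x' hx'
  replace hx' : ((x', false) : X × Bool) = (x, false) := hx'
  simp only [Prod.mk.injEq] at hx'
  obtain ⟨rfl, -⟩ := hx'
  refine ⟨{x'}, hx, rfl, ?_⟩
  rintro ⟨a, b⟩ ⟨h1, h2⟩
  simp only [Set.mem_singleton_iff] at h1
  subst h1
  cases b
  · rfl
  · exact absurd rfl h2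

lemma ad_false_inducing :
    @Topology.IsInducing X (ADSpace X) _ _ (fun x => (x, false)) := by
  refine ⟨?_⟩
  refine TopologicalSpace.ext_iff.mpr fun s => ⟨fun hs => ?_, fun hs => ?_⟩
  · refine isOpen_induced_iff.mpr ⟨{p : X × Bool | p.1 ∈ s}, ?_, rfl⟩
    exact ad_isOpen_iff.mpr fun x hx => ⟨s, hs, hx, fun p hp => hp.1⟩
  · obtain ⟨V, hV, rfl⟩ := isOpen_induced_iff.mp hs
    replace hV := ad_isOpen_iff.mp hV
    apply isOpen_iff_forall_mem_open.mpr
    intro x hx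
    obtain ⟨U, hUo, hUx, hUsub⟩ := hV x hx
    exact ⟨U, fun y hy => hUsub ⟨hy, by simp⟩, hUo, hUx⟩

lemma ad_false_embedding :
    @Topology.IsEmbedding X (ADSpace X) _ _ (fun x => (x, false)) :=
  ⟨ad_false_inducing, fun a b hab => congrArg Prod.fst hab⟩

end ADAux

/-- if the Alexandroff duplicate of a compact Hausdorff space is
semi-Eberlein, then the space is Corson compact. -/
theorem corson_of_AD_semiEberlein
    (K : Type u) [TopologicalSpace K] [CompactSpace K] [T2Space K]
    (h : @SemiEberlein (K × Bool) (adTopology K)) :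
    CorsonCompact K := by
  replace h : SemiEberlein (ADSpace K) := h
  obtain ⟨Γ, H, hemb, hden⟩ := h
  have hcont : Continuous H := hemb.continuous
  -- isolated points of the duplicate are mapped into `c₀`
  have hiso : ∀ p : K × Bool, @IsOpen (ADSpace K) _ {p} →
      ∀ ε : ℝ, 0 < ε → {γ | ε < (H p γ : ℝ)}.Finite := by
    intro p hp
    obtain ⟨O, hO, hpre⟩ := hemb.toIsInducing.isOpen_iff.mp hp
    have hpO : H p ∈ O := by
      have hpp : p ∈ H ⁻¹' O := by rw [hpre]; rfl
      exact hpp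
    have hcl : H p ∈ closure (Set.range H ∩
        {x | ∀ ε : ℝ, 0 < ε → {γ | ε < (x γ : ℝ)}.Finite}) := hden ⟨p, rfl⟩
    obtain ⟨z, hzO, ⟨q, hq⟩, hzP⟩ := mem_closure_iff.mp hcl O hO hpO
    have hqp : q = p := by
      have hqO : q ∈ H ⁻¹' O := by rw [Set.mem_preimage, hq]; exact hzO
      rw [hpre] at hqO
      exact hqO
    rw [← hqp, hq]
    exact hzP
  have htrue : ∀ (y : K) (ε : ℝ), 0 < ε → {γ | ε < (H (y, true) γ : ℝ)}.Finite :=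
    fun y => hiso (y, true) (ad_singleton_true y)
  -- the main countability lemma
  have main : ∀ (x : K) (ε : ℝ), 0 < ε → {γ | ε < (H (x, false) γ : ℝ)}.Countable := by
    intro x ε hε
    by_cases hxiso : IsOpen ({x} : Set K)
    · exact (hiso (x, false) (ad_singleton_false hxiso) ε hε).countable
    by_contra hA
    set A := {γ | ε < (H (x, false) γ : ℝ)} with hAdef
    have hAinf : A.Infinite := fun hfin => hA hfin.countable
    have hU : ∀ γ ∈ A, ∃ U : Set K, IsOpen U ∧ x ∈ U ∧
        ∀ y ∈ U, y ≠ x → ε / 2 < (H (y, true) γ : ℝ) := by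
      intro γ hγ
      have hWopen : IsOpen
          ((fun p : ADSpace K => (H p γ : ℝ)) ⁻¹' Set.Ioi (ε / 2)) :=
        IsOpen.preimage (continuous_subtype_val.comp ((continuous_apply γ).comp hcont))
          isOpen_Ioi
      obtain ⟨U, hUo, hUx, hUsub⟩ := ad_isOpen_iff.mp hWopen x
        (lt_trans (half_lt_self hε) hγ)
      exact ⟨U, hUo, hUx, fun y hyU hyx =>
        hUsub ⟨hyU, fun hc => hyx (congrArg Prod.fst hc)⟩⟩
    choose U hUo hUx hUy using hU
    have e : ℕ ↪ ↥A := hAinf.natEmbedding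
    by_cases hy : ∃ y, y ≠ x ∧ ∀ n : ℕ, y ∈ U (e n).1 (e n).2
    · obtain ⟨y, hyx, hyU⟩ := hy
      have hfin := htrue y (ε / 2) (half_pos hε)
      have hsub : Set.range (fun n => ((e n : A) : Γ)) ⊆
          {γ | ε / 2 < (H (y, true) γ : ℝ)} := by
        rintro γ ⟨n, rfl⟩
        exact hUy _ _ y (hyU n) hyx
      exact (Set.infinite_range_of_injective
        (Subtype.val_injective.comp e.injective)).mono hsub hfin
    push_neg at hy
    -- build a decreasing sequence of closed neighborhoods of x
    have key : ∀ O : Set K, ∃ C : Set K, O ∈ 𝓝 x → C ∈ 𝓝 x ∧ IsClosed C ∧ C ⊆ O := by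
      intro O
      by_cases hO : O ∈ 𝓝 x
      · obtain ⟨C, ⟨hC1, hC2⟩, hC3⟩ := (closed_nhds_basis x).mem_iff.mp hO
        exact ⟨C, fun _ => ⟨hC1, hC2, hC3⟩⟩
      · exact ⟨∅, fun hO' => absurd hO' hO⟩
    choose f hf using key
    set C : ℕ → Set K := fun n => Nat.rec (f (U (e 0).1 (e 0).2))
      (fun m Cm => f (Cm ∩ U (e (m + 1)).1 (e (m + 1)).2)) n with hCdef
    have hCn : ∀ n, C n ∈ 𝓝 x ∧ IsClosed (C n) ∧ C n ⊆ U (e n).1 (e n).2 := by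
      intro n
      induction n with
      | zero =>
        have h0 := hf (U (e 0).1 (e 0).2)
          ((hUo (e 0).1 (e 0).2).mem_nhds (hUx (e 0).1 (e 0).2))
        exact ⟨h0.1, h0.2.1, h0.2.2⟩
      | succ m ih =>
        have hmem : C m ∩ U (e (m + 1)).1 (e (m + 1)).2 ∈ 𝓝 x :=
          Filter.inter_mem ih.1
            ((hUo (e (m + 1)).1 (e (m + 1)).2).mem_nhds (hUx (e (m + 1)).1 (e (m + 1)).2))
        have h1 := hf _ hmem
        exact ⟨h1.1, h1.2.1, h1.2.2.trans Set.inter_subset_right⟩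
    have hCdec : ∀ n, C (n + 1) ⊆ C n := by
      intro n
      have hmem : C n ∩ U (e (n + 1)).1 (e (n + 1)).2 ∈ 𝓝 x :=
        Filter.inter_mem (hCn n).1
          ((hUo (e (n + 1)).1 (e (n + 1)).2).mem_nhds (hUx (e (n + 1)).1 (e (n + 1)).2))
      exact (hf _ hmem).2.2.trans Set.inter_subset_left
    have hCint : ∀ z ∈ ⋂ n, C n, z = x := by
      intro z hz
      by_contra hzx
      obtain ⟨n, hn⟩ := hy z hzx
      exact hn ((hCn n).2.2 (Set.mem_iInter.mp hz n))
    have hyn : ∀ n, ∃ z, z ∈ C n ∧ z ≠ x := by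
      intro n
      obtain ⟨O, hOs, hOo, hOx⟩ := mem_nhds_iff.mp (hCn n).1
      by_contra hcon
      push_neg at hcon
      have hOsing : O = {x} :=
        Set.eq_singleton_iff_unique_mem.mpr ⟨hOx, fun z hz => hcon z (hOs hz)⟩
      exact hxiso (hOsing ▸ hOo)
    choose yy hyC hyx using hyn
    have hbase : ∀ (γ : Γ) (hγ : γ ∈ A), ∃ n, C n ⊆ U γ hγ := by
      intro γ hγ
      by_contra hcon
      push_neg at hcon
      have hne : ∀ n, (C n ∩ (U γ hγ)ᶜ).Nonempty := by
        intro n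
        rcases Set.not_subset.mp (hcon n) with ⟨z, hz1, hz2⟩
        exact ⟨z, hz1, hz2⟩
      have hdec2 : ∀ n, C (n + 1) ∩ (U γ hγ)ᶜ ⊆ C n ∩ (U γ hγ)ᶜ :=
        fun n => Set.inter_subset_inter_left _ (hCdec n)
      have hcl : ∀ n, IsClosed (C n ∩ (U γ hγ)ᶜ) :=
        fun n => (hCn n).2.1.inter (hUo γ hγ).isClosed_compl
      obtain ⟨z, hz⟩ := IsCompact.nonempty_iInter_of_sequence_nonempty_isCompact_isClosed
        _ hdec2 hne (hcl 0).isCompact hcl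
      have hz1 : z ∈ ⋂ n, C n := Set.mem_iInter.mpr fun n => (Set.mem_iInter.mp hz n).1
      have hz2 := (Set.mem_iInter.mp hz 0).2
      exact hz2 (by rw [hCint z hz1]; exact hUx γ hγ)
    apply hA
    have hAsub : A ⊆ ⋃ n : ℕ, {γ | ε / 2 < (H (yy n, true) γ : ℝ)} := by
      intro γ hγ
      obtain ⟨n, hn⟩ := hbase γ hγ
      exact Set.mem_iUnion.mpr ⟨n, hUy γ hγ (yy n) (hn (hyC n)) (hyx n)⟩
    exact Set.Countable.mono hAsub
      (Set.countable_iUnion fun n => (htrue (yy n) (ε / 2) (half_pos hε)).countable)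
  refine ⟨Γ, fun x => H (x, false), hemb.comp ad_false_embedding, ?_⟩
  intro x
  have hsup : {γ | H (x, false) γ ≠ 0} ⊆
      ⋃ n : ℕ, {γ | 1 / ((n : ℝ) + 1) < (H (x, false) γ : ℝ)} := by
    intro γ hγ
    have hne : (H (x, false) γ : ℝ) ≠ 0 := fun h0 => hγ (Subtype.ext h0)
    have hpos : (0 : ℝ) < (H (x, false) γ : ℝ) :=
      lt_of_le_of_ne (H (x, false) γ).2.1 (Ne.symm hne)
    obtain ⟨n, hn⟩ := exists_nat_one_div_lt hpos
    exact Set.mem_iUnion.mpr ⟨n, hn⟩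
  exact Set.Countable.mono hsup (Set.countable_iUnion fun n => main x _ (by positivity))
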